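/- A Boolean algebra is atomic if and only if it has a complete representation, i.e., a Boolean embedding into a powerset preserving all existing infima and suprema. -/
import Mathlib


section Defs
variable {L : Type} [Lattice L] [BoundedOrder L] {X : Type}

/-- A representation: a bounded lattice embedding into a powerset. -/
def IsRep (h : L → Set X) : Prop :=
  Function.Injective h ∧ (∀ a b : L, h (a ⊓ b) = h a ∩ h b) ∧
    (∀ a b : L, h (a ⊔ b) = h a ∪ h b) ∧ h ⊥ = ∅ ∧ h ⊤ = Set.univ

/-- Meet-complete: existing infima are sent to intersections. -/
def MeetComplete (h : L → Set X) : Prop :=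
  ∀ (S : Set L) (x : L), IsGLB S x → h x = ⋂ a ∈ S, h a

/-- Join-complete: existing suprema are sent to unions. -/
def JoinComplete (h : L → Set X) : Prop :=
  ∀ (S : Set L) (x : L), IsLUB S x → h x = ⋃ a ∈ S, h a

def IsFilter' (F : Set L) : Prop :=
  ⊤ ∈ F ∧ (∀ a b : L, a ∈ F → a ≤ b → b ∈ F) ∧ (∀ a b : L, a ∈ F → b ∈ F → a ⊓ b ∈ F)

def IsPrimeFilter (F : Set L) : Prop :=
  IsFilter' F ∧ ⊥ ∉ F ∧ ∀ a b : L, a ⊔ b ∈ F → a ∈ F ∨ b ∈ F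

/-- Complete filter: contains all existing infima of its subsets. -/
def CompleteFilter (F : Set L) : Prop :=
  ∀ S ⊆ F, ∀ x : L, IsGLB S x → x ∈ F

/-- Completely prime filter: if an existing supremum lies in F then some element does. -/
def CompletelyPrimeFilter (F : Set L) : Prop :=
  ∀ (S : Set L) (x : L), IsLUB S x → x ∈ F → ∃ s ∈ S, s ∈ F

/-- Complete ideal: contains all existing suprema of its subsets. -/
def CompleteIdeal (I : Set L) : Prop :=
  ∀ S ⊆ I, ∀ x : L, IsLUB S x → x ∈ I

/-- Completely prime ideal: if an existing infimum lies in I then some element does. -/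
def CompletelyPrimeIdeal (I : Set L) : Prop :=
  ∀ (S : Set L) (x : L), IsGLB S x → x ∈ I → ∃ s ∈ S, s ∈ I

/-- A distinguishing family of subsets of L. -/
def Distinguishing (K : Set (Set L)) : Prop :=
  ∀ a b : L, a ≠ b → ∃ s ∈ K, (a ∈ s ∧ b ∉ s) ∨ (b ∈ s ∧ a ∉ s)

/-- Ultrafilter: a maximal proper filter. -/
def IsUltrafilter (F : Set L) : Prop :=
  IsFilter' F ∧ ⊥ ∉ F ∧ ∀ G : Set L, IsFilter' G → ⊥ ∉ G → F ⊆ G → F = G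

end Defs

/-- A Boolean representation: additionally preserves complements. -/
def IsBoolRep {B X : Type} [BooleanAlgebra B] (h : B → Set X) : Prop :=
  IsRep h ∧ ∀ a : B, h aᶜ = (h a)ᶜ

private lemma atom_le_iff_inf_ne {B : Type} [BooleanAlgebra B] {p a : B}
    (hp : IsAtom p) : p ≤ a ↔ p ⊓ a ≠ ⊥ := by
  constructor
  · intro h hb
    rw [inf_eq_left.mpr h] at hb
    exact hp.1 hb
  · intro h
    rcases (hp.le_iff.mp inf_le_left) with h' | h'
    · exact absurd h' h
    · exact h' ▸ inf_le_right

private lemma atom_le_compl {B : Type} [BooleanAlgebra B] {p a : B}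
    (hp : IsAtom p) : p ≤ aᶜ ↔ ¬ p ≤ a := by
  constructor
  · intro h hle
    exact hp.1 (le_antisymm (le_inf hle h |>.trans (by simp)) bot_le)
  · intro h
    rw [atom_le_iff_inf_ne hp] at h ⊢
    intro hb
    apply h
    have : p = p ⊓ a ⊔ p ⊓ aᶜ := by rw [← inf_sup_left, sup_compl_eq_top, inf_top_eq]
    rw [hb, sup_bot_eq] at this
    rw [← this]
    exact hp.1

private lemma atom_le_sup {B : Type} [BooleanAlgebra B] {p a b : B}
    (hp : IsAtom p) : p ≤ a ⊔ b ↔ p ≤ a ∨ p ≤ b := by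
  constructor
  · intro h
    by_contra hc
    push_neg at hc
    have ha := (atom_le_compl hp).mpr hc.1
    have hb := (atom_le_compl hp).mpr hc.2
    have : p ≤ (a ⊔ b)ᶜ := by rw [compl_sup]; exact le_inf ha hb
    exact (atom_le_compl hp).mp this h
  · rintro (h | h)
    · exact h.trans le_sup_left
    · exact h.trans le_sup_right

theorem stmt11 (B : Type) [BooleanAlgebra B] :
    (∀ b : B, b ≠ ⊥ → ∃ a : B, IsAtom a ∧ a ≤ b) ↔
      ∃ (X : Type) (h : B → Set X), IsBoolRep h ∧ MeetComplete h ∧ JoinComplete h := by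
  constructor
  · intro hat
    refine ⟨{a : B // IsAtom a}, fun b => {p | p.1 ≤ b}, ⟨⟨?_, ?_, ?_, ?_, ?_⟩, ?_⟩, ?_, ?_⟩
    · -- injective
      intro a b hab
      by_contra hne
      have key : ∀ u v : B, {p : {a : B // IsAtom a} | p.1 ≤ u} = {p | p.1 ≤ v} → u ≤ v := by
        intro u v huv
        by_contra hle
        have hne' : u ⊓ vᶜ ≠ ⊥ := by
          intro h0
          exact hle (sdiff_eq_bot_iff.mp (by rw [sdiff_eq]; exact h0))
        obtain ⟨q, hq, hqle⟩ := hat _ hne'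
        have h1 : q ≤ u := hqle.trans inf_le_left
        have h2 : q ≤ vᶜ := hqle.trans inf_le_right
        have : (⟨q, hq⟩ : {a : B // IsAtom a}) ∈ {p : {a : B // IsAtom a} | p.1 ≤ u} := h1
        rw [huv] at this
        exact (atom_le_compl hq).mp h2 this
      exact hne (le_antisymm (key _ _ hab) (key _ _ hab.symm))
    · intro a b; ext p; simp [le_inf_iff]
    · intro a b; ext p; simpa using atom_le_sup p.2
    · ext p; simpa using p.2.1
    · ext p; simp
    · intro a; ext p; simpa using atom_le_compl p.2
    · -- MeetComplete
      intro S x hx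
      ext p
      simp only [Set.mem_iInter, Set.mem_setOf_eq]
      constructor
      · exact fun h a ha => h.trans (hx.1 ha)
      · exact fun h => hx.2 fun a ha => h a ha
    · -- JoinComplete
      intro S x hx
      ext p
      simp only [Set.mem_iUnion, Set.mem_setOf_eq]
      constructor
      · intro h
        by_contra hc
        push_neg at hc
        have : x ≤ (p.1)ᶜ := hx.2 fun s hs => by
          rw [← compl_compl s]
          exact compl_le_compl ((atom_le_compl p.2).mpr fun hle => hc s hs hle)
        have : p.1 ≤ (p.1)ᶜ := h.trans this
        exact p.2.1 (le_antisymm (le_inf le_rfl this |>.trans (by simp)) bot_le)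
      · rintro ⟨s, hs, hps⟩
        exact hps.trans (hx.1 hs)
  · rintro ⟨X, h, ⟨⟨hinj, hmeet, hjoin, hbot, htop⟩, _⟩, _, hJC⟩ b hb
    by_contra hno
    push_neg at hno
    -- h b is nonempty
    have hbne : h b ≠ ∅ := fun he => hb (hinj (he.trans hbot.symm))
    obtain ⟨x, hx⟩ := Set.nonempty_iff_ne_empty.mpr hbne
    set T : Set B := {c | c ≤ b ∧ x ∉ h c} with hT
    have hlub : IsLUB T b := by
      constructor
      · exact fun c hc => hc.1
      · intro u hu
        by_contra hbu
        set d := b ⊓ uᶜ with hd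
        have hdne : d ≠ ⊥ := by
          intro h0
          exact hbu (sdiff_eq_bot_iff.mp (by rw [sdiff_eq]; exact h0))
        -- split into cases on whether x ∈ h d
        have hdT : ∀ c : B, c ≤ d → c ≠ ⊥ → x ∈ h c := by
          intro c hcd hcne
          by_contra hxc
          have hcT : c ∈ T := ⟨hcd.trans inf_le_left, hxc⟩
          have : c ≤ u := hu hcT
          have : c ≤ ⊥ := le_inf this (hcd.trans inf_le_right) |>.trans
            (by rw [inf_comm]; simp)
          exact hcne (le_antisymm this bot_le)
        -- d is not an atom and nonzero, so it splits
        have : ¬ IsAtom d := fun had => hno d had inf_le_left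
        have hsplit : ∃ e : B, e ≠ ⊥ ∧ e ≤ d ∧ e ≠ d := by
          by_contra hc
          push_neg at hc
          refine this ⟨hdne, fun e he => ?_⟩
          by_contra hene
          exact (ne_of_lt he) (hc e hene he.le)
        obtain ⟨e, hene, hed, hedne⟩ := hsplit
        have hf : d ⊓ eᶜ ≠ ⊥ := by
          intro h0
          apply hedne
          exact le_antisymm hed (sdiff_eq_bot_iff.mp (by rw [sdiff_eq]; exact h0))
        have hxe := hdT e hed hene
        have hxf := hdT (d ⊓ eᶜ) inf_le_left hf
        have : x ∈ h (e ⊓ (d ⊓ eᶜ)) := by rw [hmeet]; exact ⟨hxe, hxf⟩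
        have h0 : e ⊓ (d ⊓ eᶜ) = ⊥ := by
          rw [← inf_assoc, inf_comm e d, inf_assoc]
          simp
        rw [h0, hbot] at this
        exact this
    have := hJC T b hlub
    rw [this] at hx
    simp only [Set.mem_iUnion] at hx
    obtain ⟨c, hc, hxc⟩ := hx
    exact hc.2 hxc
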